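/- In the planar Boolean model with discs of i.i.d. random radii R distributed as μ intersecting the ball B(0,r), the mean m_r of the normalized arc-length ℓ of the shadow cast on the circle of radius r satisfies m_r ~ 2E[R]/(π r) as r → ∞. Concretely: if ℓ is the image of (R, U) ~ μ ⊗ Uniform(0,1) under ℓ = (1/π)·arcsin(1/√(1 + (r/R)(2 + r/R)U)) for 0 ≤ U ≤ r/(r+2R), and ℓ = (1/π)·arccos((r/R + (2 + r/R)U)/(2√(1 + (r/R)(2 + r/R)U))) for r/(r+2R) ≤ U ≤ 1, then lim_{r→∞} r·E[ℓ] = 2E[R]/π. -/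

import Mathlib

open MeasureTheory

noncomputable def shadowLen (R u r : ℝ) : ℝ :=
  if u ≤ r / (r + 2*R) then
    (1/Real.pi) * Real.arcsin (1 / Real.sqrt (1 + (r/R)*(2 + r/R)*u))
  else
    (1/Real.pi) * Real.arccos ((r/R + (2 + r/R)*u) / (2 * Real.sqrt (1 + (r/R)*(2 + r/R)*u)))

namespace ShadowAux
open Real Set Filter intervalIntegral

lemma arctan_le_self {y : ℝ} (hy : 0 ≤ y) : arctan y ≤ y := by
  rcases eq_or_lt_of_le hy with h | h
  · simp [← h]
  · have h1 : 0 < arctan y := by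
      rw [Real.arctan_eq_arcsin]
      exact Real.arcsin_pos.2 (div_pos h (Real.sqrt_pos.2 (by positivity)))
    have h2 : arctan y < π / 2 := Real.arctan_lt_pi_div_two y
    have h3 := Real.lt_tan h1 h2
    rw [Real.tan_arctan] at h3
    exact h3.le

lemma arcsin_le_mul {y : ℝ} (h0 : 0 ≤ y) (h1 : y ≤ 1) : arcsin y ≤ π/2 * y := by
  have h2 : 2/π * arcsin y ≤ sin (arcsin y) :=
    Real.mul_le_sin (Real.arcsin_nonneg.2 h0) (Real.arcsin_le_pi_div_two _)
  rw [Real.sin_arcsin (by linarith) h1] at h2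
  have hπ := Real.pi_pos
  rw [div_mul_eq_mul_div, div_le_iff₀ hπ] at h2
  nlinarith

lemma shadow_nonneg (x u r : ℝ) : 0 ≤ shadowLen x u r := by
  unfold shadowLen
  have hπ := Real.pi_pos
  split
  · exact mul_nonneg (by positivity) (Real.arcsin_nonneg.2 (by positivity))
  · exact mul_nonneg (by positivity) (Real.arccos_nonneg _)

lemma shadow_le_one (x u r : ℝ) : shadowLen x u r ≤ 1 := by
  unfold shadowLen
  have hπ := Real.pi_pos
  split
  · have := Real.arcsin_le_pi_div_two (1 / Real.sqrt (1 + (r/x)*(2 + r/x)*u))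
    calc (1/π) * Real.arcsin (1 / Real.sqrt (1 + (r/x)*(2 + r/x)*u)) ≤ (1/π) * (π/2) := by
          apply mul_le_mul_of_nonneg_left this (by positivity)
      _ ≤ 1 := by rw [one_div, inv_mul_eq_div, div_le_one hπ]; linarith
  · have := Real.arccos_le_pi ((r/x + (2 + r/x)*u) / (2 * Real.sqrt (1 + (r/x)*(2 + r/x)*u)))
    calc (1/π) * Real.arccos _ ≤ (1/π) * π := mul_le_mul_of_nonneg_left this (by positivity)
      _ = 1 := by field_simp

lemma shadow_measurable (r : ℝ) : Measurable (fun p : ℝ × ℝ => shadowLen p.1 p.2 r) := by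
  unfold shadowLen
  apply Measurable.ite
  · exact measurableSet_le measurable_snd
      (measurable_const.div (measurable_const.add ((measurable_fst.const_mul 2))))
  · apply Measurable.const_mul
    apply Real.continuous_arcsin.measurable.comp
    apply Measurable.div measurable_const
    apply Real.continuous_sqrt.measurable.comp
    apply Measurable.add measurable_const
    exact ((measurable_const.div measurable_fst).mul
      (measurable_const.add (measurable_const.div measurable_fst))).mul measurable_snd
  · apply Measurable.const_mul
    apply Real.continuous_arccos.measurable.comp
    apply Measurable.div
    · exact ((measurable_const.div measurable_fst).add
        ((measurable_const.add (measurable_const.div measurable_fst)).mul measurable_snd))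
    · apply Measurable.const_mul
      apply Real.continuous_sqrt.measurable.comp
      exact measurable_const.add (((measurable_const.div measurable_fst).mul
        (measurable_const.add (measurable_const.div measurable_fst))).mul measurable_snd)

lemma shadow_measurable_u (x r : ℝ) : Measurable (fun u => shadowLen x u r) :=
  (shadow_measurable r).comp (measurable_const.prodMk measurable_id)



lemma ftc (b θ : ℝ) (hb : 0 < b) (hθ : 0 < θ) :
    ∫ u in (0:ℝ)..θ, Real.arcsin (1 / Real.sqrt (1 + b*u))
      = (1/b) * ((1 + b*θ) * Real.arcsin (1/Real.sqrt (1 + b*θ)) + Real.sqrt (b*θ) - π/2) := by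
  set F : ℝ → ℝ := fun u => (1/b) * ((1 + b*u) * Real.arcsin (1/Real.sqrt (1 + b*u)) + Real.sqrt (b*u)) with hF
  have hcont : ContinuousOn F (Icc 0 θ) := by
    apply ContinuousOn.mul continuousOn_const
    apply ContinuousOn.add
    · apply ContinuousOn.mul (by fun_prop)
      apply Real.continuous_arcsin.comp_continuousOn
      apply ContinuousOn.div continuousOn_const (by fun_prop)
      intro u hu
      have h1 : (0:ℝ) < 1 + b*u := by nlinarith [hu.1, hu.2]
      exact (Real.sqrt_pos.2 h1).ne'
    · fun_prop
  have hderiv : ∀ u ∈ Ioo 0 θ, HasDerivWithinAt F (Real.arcsin (1 / Real.sqrt (1 + b*u))) (Ioi u) u := by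
    intro u hu
    have hu0 : 0 < u := hu.1
    have h1 : (0:ℝ) < 1 + b*u := by nlinarith
    have hbu : 0 < b*u := mul_pos hb hu0
    have hs : 0 < Real.sqrt (1 + b*u) := Real.sqrt_pos.2 h1
    have hs2 : Real.sqrt (1 + b*u) ^ 2 = 1 + b*u := Real.sq_sqrt h1.le
    have hs1 : 1 < Real.sqrt (1 + b*u) := by nlinarith
    have hg : HasDerivAt (fun u : ℝ => 1 + b*u) b u := by
      simpa using ((hasDerivAt_id u).const_mul b).const_add 1
    have hsq : HasDerivAt (fun u : ℝ => Real.sqrt (1 + b*u)) (1 / (2 * Real.sqrt (1 + b*u)) * b) u :=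
      (Real.hasDerivAt_sqrt h1.ne').comp u hg
    have hinv : HasDerivAt (fun u : ℝ => 1 / Real.sqrt (1 + b*u))
        (-(1 / (2 * Real.sqrt (1 + b*u)) * b) / (Real.sqrt (1 + b*u))^2) u := by
      exact (hsq.inv hs.ne').congr_of_eventuallyEq (Filter.Eventually.of_forall fun y => by simp [one_div])
    have hy0 : -1 < 1 / Real.sqrt (1 + b*u) := by
      have : (0:ℝ) < 1 / Real.sqrt (1 + b*u) := by positivity
      linarith
    have hy1 : 1 / Real.sqrt (1 + b*u) < 1 := by
      rw [div_lt_one hs]; exact hs1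
    have harc : HasDerivAt (fun u : ℝ => Real.arcsin (1 / Real.sqrt (1 + b*u)))
        (1 / Real.sqrt (1 - (1 / Real.sqrt (1 + b*u))^2) *
          (-(1 / (2 * Real.sqrt (1 + b*u)) * b) / (Real.sqrt (1 + b*u))^2)) u :=
      by have := (Real.hasDerivAt_arcsin hy0.ne' hy1.ne).comp u hinv; exact this
    have hsq2 : HasDerivAt (fun u : ℝ => Real.sqrt (b*u)) (1 / (2 * Real.sqrt (b*u)) * b) u := by
      have : HasDerivAt (fun u : ℝ => b*u) b u := by simpa using (hasDerivAt_id u).const_mul b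
      exact (Real.hasDerivAt_sqrt hbu.ne').comp u this
    have htot := ((hg.mul harc).add hsq2).const_mul (1/b)
    have heq : (1/b) * (b * Real.arcsin (1 / Real.sqrt (1 + b*u)) +
        (1 + b*u) * (1 / Real.sqrt (1 - (1 / Real.sqrt (1 + b*u))^2) *
          (-(1 / (2 * Real.sqrt (1 + b*u)) * b) / (Real.sqrt (1 + b*u))^2)) +
        1 / (2 * Real.sqrt (b*u)) * b) = Real.arcsin (1 / Real.sqrt (1 + b*u)) := by
      have hred : Real.sqrt (1 - (1 / Real.sqrt (1 + b*u))^2) = Real.sqrt (b*u) / Real.sqrt (1 + b*u) := by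
        rw [div_pow, one_pow, hs2, ← Real.sqrt_div hbu.le]
        congr 1
        field_simp
        ring
      rw [hred, hs2]
      have hsbu : 0 < Real.sqrt (b*u) := Real.sqrt_pos.2 hbu
      have hsbu2 : Real.sqrt (b*u) ^ 2 = b*u := Real.sq_sqrt hbu.le
      field_simp
      ring
    exact (heq ▸ htot).hasDerivWithinAt
  have hint : IntervalIntegrable (fun u => Real.arcsin (1 / Real.sqrt (1 + b*u))) volume 0 θ := by
    apply ContinuousOn.intervalIntegrable
    apply Real.continuous_arcsin.comp_continuousOn
    apply ContinuousOn.div continuousOn_const (by fun_prop)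
    intro u hu
    rw [uIcc_of_le hθ.le] at hu
    have h1 : (0:ℝ) < 1 + b*u := by nlinarith [hu.1, hu.2]
    exact (Real.sqrt_pos.2 h1).ne'
  rw [integral_eq_sub_of_hasDeriv_right_of_le hθ.le hcont hderiv hint]
  simp only [hF]
  rw [mul_zero, add_zero, Real.sqrt_zero, Real.sqrt_one]
  norm_num [Real.arcsin_one]
  ring
lemma arctan_arcsin {t : ℝ} (ht : 0 < t) :
    Real.arcsin (1 / Real.sqrt (1 + t^2)) = Real.arctan (1/t) := by
  rw [Real.arctan_eq_arcsin]
  congr 1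
  rw [show (1:ℝ) + (1/t)^2 = (1+t^2)/t^2 by field_simp; ring]
  rw [Real.sqrt_div (by positivity), Real.sqrt_sq ht.le]
  have hs0 : Real.sqrt (1+t^2) ≠ 0 := (Real.sqrt_pos.2 (by positivity)).ne'
  field_simp

lemma arccos_bound {t v : ℝ} (ht : 1 ≤ t) (hv1 : 1 + t^2 ≤ v) (hv2 : v ≤ (1+t)^2) :
    Real.arccos ((v + t^2 - 1) / (2*t*Real.sqrt v)) ≤ π/(2*t) := by
  have ht0 : 0 < t := by linarith
  have hv0 : 0 < v := by nlinarith
  have hsv : 0 < Real.sqrt v := Real.sqrt_pos.2 hv0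
  have hsv2 : Real.sqrt v ^ 2 = v := Real.sq_sqrt hv0.le
  have hsvl : t ≤ Real.sqrt v := by
    have := Real.sqrt_le_sqrt (show t^2 ≤ v by nlinarith)
    rwa [Real.sqrt_sq ht0.le] at this
  have hsvu : Real.sqrt v ≤ 1 + t := by
    have := Real.sqrt_le_sqrt hv2
    rwa [Real.sqrt_sq (by linarith)] at this
  set c : ℝ := (v + t^2 - 1) / (2*t*Real.sqrt v) with hc
  have hc0 : 0 ≤ c := by
    apply div_nonneg (by nlinarith) (by positivity)
  have hc1 : c ≤ 1 := by
    rw [hc, div_le_one (by positivity)]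
    nlinarith
  have hcsq : c^2 = (v + t^2 - 1)^2 / (4*t^2*v) := by
    rw [hc, div_pow]
    congr 1
    rw [mul_pow, mul_pow, hsv2]; ring
  have h4 : 4*v*(t^2-1) ≤ (v + t^2 - 1)^2 := by nlinarith [sq_nonneg (v - (t^2-1))]
  have hkey : 1 - c^2 ≤ 1/t^2 := by
    rw [hcsq, sub_le_iff_le_add, div_add_div _ _ (by positivity) (by positivity),
      le_div_iff₀ (by positivity)]
    nlinarith [mul_le_mul_of_nonneg_left h4 (sq_nonneg t)]
  rw [Real.arccos_eq_arcsin hc0]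
  have h5 : Real.sqrt (1 - c^2) ≤ 1/t := by
    have := Real.sqrt_le_sqrt hkey
    rwa [show (1:ℝ)/t^2 = (1/t)^2 by ring, Real.sqrt_sq (by positivity)] at this
  calc Real.arcsin (Real.sqrt (1 - c^2)) ≤ Real.arcsin (1/t) := Real.monotone_arcsin h5
    _ ≤ π/2 * (1/t) := arcsin_le_mul (by positivity) (by rw [div_le_one ht0]; linarith)
    _ = π/(2*t) := by ring

noncomputable def Jfun (x r : ℝ) : ℝ :=
  (x^2/(π*r*(r+2*x))) * ((1+(r/x)^2) * Real.arctan (x/r) + r/x - π/2)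

lemma shadow_integrableOn (x r : ℝ) {s : Set ℝ} (hs : MeasurableSet s) (hfin : volume s < ⊤) :
    IntegrableOn (fun u => shadowLen x u r) s := by
  apply Integrable.mono' (integrableOn_const (C := (1:ℝ)) hfin.ne)
    ((shadow_measurable_u x r).aestronglyMeasurable)
  refine Filter.Eventually.of_forall fun u => ?_
  rw [Real.norm_of_nonneg (shadow_nonneg x u r)]
  exact shadow_le_one x u r

lemma key {x r : ℝ} (hx : 0 < x) (hxr : x ≤ r) :
    Jfun x r ≤ ∫ u in Set.Ioo (0:ℝ) 1, shadowLen x u r ∧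
      (∫ u in Set.Ioo (0:ℝ) 1, shadowLen x u r) ≤ Jfun x r + x^2/(r*(r+2*x)) := by
  have hr : 0 < r := lt_of_lt_of_le hx hxr
  have hπ := Real.pi_pos
  set t := r/x with htdef
  have ht0 : 0 < t := div_pos hr hx
  have ht1 : 1 ≤ t := (one_le_div hx).2 hxr
  set b := (r/x)*(2+r/x) with hbdef
  have hb : 0 < b := by rw [hbdef, ← htdef]; nlinarith
  set θ := r/(r+2*x) with hθdef
  clear_value t b θ
  have hθ0 : 0 < θ := by rw [hθdef]; exact div_pos hr (by linarith)
  have hθ1 : θ < 1 := by rw [hθdef, div_lt_one (by linarith)]; linarith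
  have hbθ : b*θ = t^2 := by rw [hbdef, hθdef, htdef]; field_simp; ring
  have hIoo : ∫ u in Set.Ioo (0:ℝ) 1, shadowLen x u r = ∫ u in (0:ℝ)..1, shadowLen x u r := by
    rw [intervalIntegral.integral_of_le (by norm_num), integral_Ioc_eq_integral_Ioo]
  have hiOn : ∀ (a c : ℝ), IntervalIntegrable (fun u => shadowLen x u r) volume a c := by
    intro a c
    constructor <;> exact shadow_integrableOn x r measurableSet_Ioc measure_Ioc_lt_top
  have hsplit : ∫ u in (0:ℝ)..1, shadowLen x u r
      = (∫ u in (0:ℝ)..θ, shadowLen x u r) + ∫ u in θ..(1:ℝ), shadowLen x u r :=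
    (integral_add_adjacent_intervals (hiOn 0 θ) (hiOn θ 1)).symm
  have hA : ∫ u in (0:ℝ)..θ, shadowLen x u r = Jfun x r := by
    have hcg : EqOn (fun u => shadowLen x u r)
        (fun u => (1/π) * Real.arcsin (1/Real.sqrt (1+b*u))) (Set.uIcc 0 θ) := by
      intro u hu
      rw [Set.uIcc_of_le hθ0.le] at hu
      have h2 : u ≤ r/(r+2*x) := by rw [← hθdef]; exact hu.2
      simp only [shadowLen, if_pos h2, hbdef]
    rw [intervalIntegral.integral_congr hcg, intervalIntegral.integral_const_mul,
      ftc b θ hb hθ0, hbθ, Real.sqrt_sq ht0.le, arctan_arcsin ht0,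
      show (1:ℝ)/t = x/r by rw [htdef]; field_simp]
    simp only [Jfun, hbdef, ← htdef]
    have h2x : r + 2*x ≠ 0 := by positivity
    have h1b : (1:ℝ)/(t*(2+t)) = x^2/(r*(r+2*x)) := by
      rw [htdef]; field_simp; ring
    rw [h1b]
    field_simp
  have hB1 : 0 ≤ ∫ u in θ..(1:ℝ), shadowLen x u r := by
    rw [intervalIntegral.integral_of_le hθ1.le]
    exact setIntegral_nonneg measurableSet_Ioc (fun u _ => shadow_nonneg x u r)
  have hB2 : (∫ u in θ..(1:ℝ), shadowLen x u r) ≤ x^2/(r*(r+2*x)) := by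
    rw [intervalIntegral.integral_of_le hθ1.le]
    have hbd : ∀ u ∈ Set.Ioc θ 1, shadowLen x u r ≤ x/(2*r) := by
      intro u hu
      have hu1 : θ < u := hu.1
      have hu0 : 0 < u := lt_trans hθ0 hu1
      have hcond : ¬ (u ≤ r/(r+2*x)) := by rw [← hθdef]; exact not_le.2 hu1
      rw [shadowLen, if_neg hcond]
      have hv1 : 1 + t^2 ≤ 1 + b*u := by
        have h3 : b*θ ≤ b*u := mul_le_mul_of_nonneg_left hu1.le hb.le
        rw [hbθ] at h3; linarith
      have hv2 : 1 + b*u ≤ (1+t)^2 := by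
        have h3 : b*u ≤ b*1 := mul_le_mul_of_nonneg_left hu.2 hb.le
        rw [hbdef, ← htdef] at h3 ⊢
        nlinarith
      have hVpos : (0:ℝ) < 1 + b*u := by nlinarith
      have hS : Real.sqrt (1 + b*u) ≠ 0 := (Real.sqrt_pos.2 hVpos).ne'
      have harg : (r/x + (2+r/x)*u) / (2*Real.sqrt (1+(r/x)*(2+r/x)*u))
          = ((1+b*u) + t^2 - 1)/(2*t*Real.sqrt (1+b*u)) := by
        rw [hbdef, ← htdef] at hS ⊢
        field_simp
        ring
      rw [harg]
      have h6 := arccos_bound ht1 hv1 hv2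
      calc (1/π) * Real.arccos (((1+b*u) + t^2 - 1)/(2*t*Real.sqrt (1+b*u)))
          ≤ (1/π) * (π/(2*t)) := mul_le_mul_of_nonneg_left h6 (by positivity)
        _ = x/(2*r) := by rw [htdef]; field_simp
    calc (∫ u in Set.Ioc θ 1, shadowLen x u r)
        ≤ ∫ _u in Set.Ioc θ 1, x/(2*r) :=
          setIntegral_mono_on (shadow_integrableOn x r measurableSet_Ioc measure_Ioc_lt_top)
            (integrableOn_const measure_Ioc_lt_top.ne) measurableSet_Ioc hbd
      _ = (1-θ)*(x/(2*r)) := by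
          rw [setIntegral_const, Real.volume_real_Ioc, max_eq_left (by linarith),
            smul_eq_mul]
      _ = x^2/(r*(r+2*x)) := by rw [hθdef]; field_simp; ring
  rw [hIoo, hsplit, hA]
  exact ⟨by linarith, by linarith⟩

lemma rJ_le {x r : ℝ} (hx : 0 < x) (hxr : x ≤ r) : r * Jfun x r ≤ 3*x/π := by
  have hr : 0 < r := lt_of_lt_of_le hx hxr
  have hπ := Real.pi_pos
  have h1 : Real.arctan (x/r) ≤ x/r := arctan_le_self (by positivity)
  have h2 : (1+(r/x)^2) * Real.arctan (x/r) ≤ (1+(r/x)^2)*(x/r) :=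
    mul_le_mul_of_nonneg_left h1 (by positivity)
  have h3 : (1+(r/x)^2)*(x/r) = x/r + r/x := by field_simp
  have hB : (1+(r/x)^2) * Real.arctan (x/r) + r/x - π/2 ≤ x/r + 2*(r/x) := by
    rw [h3] at h2; linarith
  have hcoef : (0:ℝ) ≤ r * (x^2/(π*r*(r+2*x))) := by positivity
  have heq : r * Jfun x r = (r * (x^2/(π*r*(r+2*x)))) * ((1+(r/x)^2) * Real.arctan (x/r) + r/x - π/2) := by
    rw [Jfun]; ring
  rw [heq]
  calc (r * (x^2/(π*r*(r+2*x)))) * ((1+(r/x)^2) * Real.arctan (x/r) + r/x - π/2)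
      ≤ (r * (x^2/(π*r*(r+2*x)))) * (x/r + 2*(r/x)) := mul_le_mul_of_nonneg_left hB hcoef
    _ = (x^3 + 2*r^2*x)/(π*r*(r+2*x)) := by field_simp
    _ ≤ 3*x/π := by
        rw [div_le_div_iff₀ (by positivity) hπ]
        have hx3 : x^3 ≤ r^2*x := by nlinarith [mul_le_mul hxr hxr hx.le hr.le, mul_le_mul_of_nonneg_left (mul_le_mul hxr hxr hx.le hr.le) hx.le]
        nlinarith [mul_le_mul_of_nonneg_right
          (show x^3 + 2*r^2*x ≤ 3*r^2*x + 6*x^2*r by nlinarith) hπ.le]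

lemma tendsto_rJ (x : ℝ) (hx : 0 < x) :
    Filter.Tendsto (fun r => r * Jfun x r) Filter.atTop (nhds (2*x/π)) := by
  have hπ := Real.pi_pos
  have hxr0 : Tendsto (fun r : ℝ => x/r) atTop (nhds 0) :=
    Tendsto.div_atTop tendsto_const_nhds tendsto_id
  have hxrne : ∀ᶠ r : ℝ in atTop, x/r ∈ ({0}ᶜ : Set ℝ) := by
    filter_upwards [eventually_gt_atTop 0] with r hr
    exact (div_pos hx hr).ne'
  have hxr' : Tendsto (fun r : ℝ => x/r) atTop (nhdsWithin 0 ({0}ᶜ : Set ℝ)) :=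
    tendsto_nhdsWithin_of_tendsto_nhds_of_eventually_within _ hxr0 hxrne
  have hslope : Tendsto (fun y : ℝ => Real.arctan y / y) (nhdsWithin 0 ({0}ᶜ : Set ℝ)) (nhds 1) := by
    have h := Real.hasDerivAt_arctan 0
    rw [hasDerivAt_iff_tendsto_slope] at h
    norm_num at h
    refine h.congr fun y => ?_
    simp [slope_def_field]
  have hq : Tendsto (fun r : ℝ => Real.arctan (x/r) / (x/r)) atTop (nhds 1) := hslope.comp hxr'
  have h1 : Tendsto (fun r : ℝ => x^2/r^2) atTop (nhds 0) :=
    Tendsto.div_atTop tendsto_const_nhds (tendsto_pow_atTop two_ne_zero)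
  have h2 : Tendsto (fun r : ℝ => 2*x/r) atTop (nhds 0) :=
    Tendsto.div_atTop tendsto_const_nhds tendsto_id
  have h3 : Tendsto (fun r : ℝ => π*x^2/(2*r)) atTop (nhds 0) :=
    Tendsto.div_atTop tendsto_const_nhds (tendsto_id.const_mul_atTop two_pos)
  have hG : Tendsto (fun r : ℝ => (1/π) * ( x * ((x^2/r^2 + 1)/(1 + 2*x/r)) * (Real.arctan (x/r) / (x/r)) + (x - π*x^2/(2*r))/(1 + 2*x/r) ))
      atTop (nhds ((1/π) * (x * ((0 + 1)/(1 + 0)) * 1 + (x - 0)/(1 + 0)))) := by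
    apply Tendsto.const_mul
    apply Tendsto.add
    · exact (tendsto_const_nhds.mul ((h1.add tendsto_const_nhds).div
        (tendsto_const_nhds.add h2) (by norm_num))).mul hq
    · exact (tendsto_const_nhds.sub h3).div (tendsto_const_nhds.add h2) (by norm_num)
  have hval : (1/π) * (x * ((0 + 1)/(1 + 0)) * 1 + (x - 0)/(1 + 0)) = 2*x/π := by
    norm_num; ring
  rw [hval] at hG
  apply hG.congr'
  filter_upwards [eventually_gt_atTop 0] with r hr
  have hrne : r ≠ 0 := hr.ne'
  have h2x : r + 2*x ≠ 0 := by positivity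
  have hxrne' : x/r ≠ 0 := (div_pos hx hr).ne'
  have h12x : 1 + 2*x/r ≠ 0 := by positivity
  rw [Jfun]
  field_simp
  ring

lemma tendsto_point (x : ℝ) (hx : 0 < x) :
    Filter.Tendsto (fun r => r * ∫ u in Set.Ioo (0:ℝ) 1, shadowLen x u r)
      Filter.atTop (nhds (2*x/π)) := by
  have hupper : Tendsto (fun r : ℝ => r * Jfun x r + x^2/(r+2*x)) atTop (nhds (2*x/π)) := by
    have h0 : Tendsto (fun r : ℝ => x^2/(r+2*x)) atTop (nhds 0) :=
      Tendsto.div_atTop tendsto_const_nhds (tendsto_atTop_add_const_right _ _ tendsto_id)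
    simpa using (tendsto_rJ x hx).add h0
  apply tendsto_of_tendsto_of_tendsto_of_le_of_le' (tendsto_rJ x hx) hupper
  · filter_upwards [eventually_ge_atTop x, eventually_gt_atTop 0] with r h1 h2
    exact mul_le_mul_of_nonneg_left (key hx h1).1 h2.le
  · filter_upwards [eventually_ge_atTop x, eventually_gt_atTop 0] with r h1 h2
    have hk := (key hx h1).2
    have step := mul_le_mul_of_nonneg_left hk h2.le
    have h2x : r + 2*x ≠ 0 := by positivity
    have he : r * (Jfun x r + x^2/(r*(r+2*x))) = r * Jfun x r + x^2/(r+2*x) := by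
      field_simp
    rwa [he] at step

end ShadowAux

open ShadowAux in
/-- the mean `m_r` of the normalized shadow arc-length, for radii distributed as
a bounded positive law `μ` and uniform position parameter, satisfies
`r · m_r → 2 E[R]/π` as `r → ∞`. -/
theorem shadow_mean_asymptotics (μ : Measure ℝ) [IsProbabilityMeasure μ] (C : ℝ)
    (hsupp : ∀ᵐ x ∂μ, 0 < x ∧ x ≤ C) :
    Filter.Tendsto
      (fun r : ℝ => r * ∫ x, (∫ u in Set.Ioo (0:ℝ) 1, shadowLen x u r) ∂μ)
      Filter.atTop (nhds (2 * (∫ x, x ∂μ) / Real.pi)) := by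
  have hπ := Real.pi_pos
  have hμ : μ ≠ 0 := IsProbabilityMeasure.ne_zero μ
  have hne : (ae μ).NeBot := ae_neBot.2 hμ
  obtain ⟨x0, hx0⟩ := hsupp.exists
  have hC : 0 < C := lt_of_lt_of_le hx0.1 hx0.2
  have htarget : 2 * (∫ x, x ∂μ) / Real.pi = ∫ x, 2*x/Real.pi ∂μ := by
    rw [show (fun x:ℝ => 2*x/Real.pi) = fun x:ℝ => (2/Real.pi)*x by funext y; ring,
      integral_const_mul]
    ring
  rw [htarget]
  have hFeq : (fun r : ℝ => r * ∫ x, (∫ u in Set.Ioo (0:ℝ) 1, shadowLen x u r) ∂μ)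
      = fun r : ℝ => ∫ x, r * (∫ u in Set.Ioo (0:ℝ) 1, shadowLen x u r) ∂μ := by
    funext r; rw [integral_const_mul]
  rw [hFeq]
  apply MeasureTheory.tendsto_integral_filter_of_dominated_convergence
    (fun _ : ℝ => 3*C/Real.pi + C^2)
  · refine Filter.Eventually.of_forall fun r => ?_
    exact (((shadow_measurable r).stronglyMeasurable).integral_prod_right').aestronglyMeasurable.const_mul r
  · filter_upwards [Filter.eventually_ge_atTop (max C 1)] with r hr
    have hrC : C ≤ r := le_trans (le_max_left _ _) hr
    have hr1 : (1:ℝ) ≤ r := le_trans (le_max_right _ _) hr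
    have hr0 : (0:ℝ) < r := lt_of_lt_of_le one_pos hr1
    filter_upwards [hsupp] with y hy
    have hyr : y ≤ r := le_trans hy.2 hrC
    have hI0 : 0 ≤ ∫ u in Set.Ioo (0:ℝ) 1, shadowLen y u r :=
      setIntegral_nonneg measurableSet_Ioo (fun u _ => shadow_nonneg y u r)
    rw [Real.norm_of_nonneg (mul_nonneg hr0.le hI0)]
    have hk := (key hy.1 hyr).2
    have h2y : r + 2*y ≠ 0 := by nlinarith [hy.1]
    have he : r * (Jfun y r + y^2/(r*(r+2*y))) = r * Jfun y r + y^2/(r+2*y) := by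
      field_simp
    calc r * ∫ u in Set.Ioo (0:ℝ) 1, shadowLen y u r
        ≤ r * (Jfun y r + y^2/(r*(r+2*y))) := mul_le_mul_of_nonneg_left hk hr0.le
      _ = r * Jfun y r + y^2/(r+2*y) := he
      _ ≤ 3*C/Real.pi + C^2 := by
          have h1 := rJ_le hy.1 hyr
          have h2 : y^2/(r+2*y) ≤ y^2 := div_le_self (sq_nonneg y) (by linarith [hy.1])
          have h3 : y^2 ≤ C^2 := by nlinarith [hy.1, hy.2]
          have h4 : 3*y/Real.pi ≤ 3*C/Real.pi := by gcongr; exact hy.2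
          linarith
  · exact integrable_const _
  · filter_upwards [hsupp] with y hy
    exact tendsto_point y hy.1
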